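/- Let (A, B) be a real matrix pair with A ∈ ℝ^{n×n} and B ∈ ℝ^{n×r} that is controllable with controllability index m, and suppose moreover that mr = n. Then for each real matrix M ∈ ℝ^{n×n}, the controllability index of (M + gA, B) equals exactly m for all but at most finitely many values of the real scalar g. -/
import Mathlib


open Matrix Finset Polynomial

/-- The controllability matrix `[B, AB, …, A^{k-1}B]` of the pair `(A, B)`. -/
def ctrbMat {ι κ : Type*} [Fintype ι] [DecidableEq ι]
    (A : Matrix ι ι ℝ) (B : Matrix ι κ ℝ) (k : ℕ) : Matrix ι (Fin k × κ) ℝ :=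
  Matrix.of fun i p => ((A ^ (p.1 : ℕ)) * B) i p.2

/-- `(A, B)` is controllable if its controllability matrix has full rank. -/
def Controllable {ι κ : Type*} [Fintype ι] [DecidableEq ι] [Fintype κ]
    (A : Matrix ι ι ℝ) (B : Matrix ι κ ℝ) : Prop :=
  (ctrbMat A B (Fintype.card ι)).rank = Fintype.card ι

/-- The controllability index: the smallest positive `k` with
`rank [B, AB, …, A^{k-1}B]` full. -/
noncomputable def ctrlIndex {ι κ : Type*} [Fintype ι] [DecidableEq ι] [Fintype κ]
    (A : Matrix ι ι ℝ) (B : Matrix ι κ ℝ) : ℕ :=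
  sInf {k | 0 < k ∧ (ctrbMat A B k).rank = Fintype.card ι}

/-- `(C, A)` is observable iff `(Aᵀ, Cᵀ)` is controllable. -/
def Observable {ι κ : Type*} [Fintype ι] [DecidableEq ι] [Fintype κ]
    (C : Matrix κ ι ℝ) (A : Matrix ι ι ℝ) : Prop :=
  Controllable Aᵀ Cᵀ

/-- **Lemma 5, second part.** If `(A, B)` is controllable with
controllability index `m` and `m r = n`, then for each real matrix `M`, the
controllability index of `(M + gA, B)` equals exactly `m` for all but at most
finitely many real scalars `g`. -/
lemma rank_eq_card_iff_isUnit_det {ι : Type*} [Fintype ι] [DecidableEq ι] (A : Matrix ι ι ℝ) :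
    A.rank = Fintype.card ι ↔ IsUnit A.det := by
  constructor
  · intro h
    rw [← Matrix.isUnit_iff_isUnit_det, ← Matrix.mulVec_surjective_iff_isUnit]
    have : LinearMap.range A.mulVecLin = ⊤ := by
      apply Submodule.eq_top_of_finrank_eq
      rw [← Matrix.rank, h, Module.finrank_pi]
    exact LinearMap.range_eq_top.mp this
  · intro h
    rw [← Matrix.isUnit_iff_isUnit_det] at h
    exact Matrix.rank_of_isUnit A h

lemma sel_mul {l o p : Type*} [Fintype o] [DecidableEq o]
    (A : Matrix l o ℝ) (g : p → o) :
    A.submatrix id g = A * (Matrix.of fun q c => if q = g c then (1:ℝ) else 0) := by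
  ext i c
  simp [Matrix.mul_apply, Finset.sum_ite_eq, Finset.sum_ite_eq']

lemma rank_submatrix_id_le {l o p : Type*} [Fintype o] [DecidableEq o] [Fintype p]
    (A : Matrix l o ℝ) (g : p → o) :
    (A.submatrix id g).rank ≤ A.rank := by
  rw [sel_mul]
  exact Matrix.rank_mul_le_left _ _

lemma rank_submatrix_id_eq {l o p : Type*} [Fintype o] [DecidableEq o] [Fintype p] [DecidableEq p]
    (A : Matrix l o ℝ) (e : p ≃ o) :
    (A.submatrix id e).rank = A.rank := by
  refine le_antisymm (rank_submatrix_id_le A e) ?_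
  have h : (A.submatrix id (e : p → o)).submatrix id (e.symm : o → p) = A := by
    ext i j; simp
  calc A.rank = ((A.submatrix id (e : p → o)).submatrix id (e.symm : o → p)).rank := by rw [h]
    _ ≤ (A.submatrix id (e : p → o)).rank := rank_submatrix_id_le _ _

section

variable {n r : ℕ} {B : Matrix (Fin n) (Fin r) ℝ}

lemma ctrb_sub {m k : ℕ} (hmk : m ≤ k) (X : Matrix (Fin n) (Fin n) ℝ) :
    ctrbMat X B m
      = (ctrbMat X B k).submatrix id (fun p => (Fin.castLE hmk p.1, p.2)) := by
  ext i p
  simp [ctrbMat]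

lemma rank_ctrb_mono {m k : ℕ} (hmk : m ≤ k) (X : Matrix (Fin n) (Fin n) ℝ) :
    (ctrbMat X B m).rank ≤ (ctrbMat X B k).rank := by
  rw [ctrb_sub hmk X]
  exact rank_submatrix_id_le _ _

lemma controllable_of_rank {m : ℕ} (hmn : m ≤ n) (X : Matrix (Fin n) (Fin n) ℝ)
    (h : (ctrbMat X B m).rank = n) : Controllable X B := by
  unfold Controllable
  have hfc : (ctrbMat X B (Fintype.card (Fin n))).rank = (ctrbMat X B n).rank :=
    congrArg (fun k => (ctrbMat X B k).rank) (Fintype.card_fin n)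
  rw [hfc, Fintype.card_fin]
  refine le_antisymm ?_ ?_
  · simpa using (ctrbMat X B n).rank_le_card_height
  · exact h.symm.trans_le (rank_ctrb_mono hmn X)

lemma ctrlIndex_eq_of_rank {m : ℕ} (hm : 0 < m) (hr : 0 < r) (hmr : m * r = n)
    (X : Matrix (Fin n) (Fin n) ℝ)
    (h : (ctrbMat X B m).rank = n) : ctrlIndex X B = m := by
  unfold ctrlIndex
  simp only [Fintype.card_fin]
  refine le_antisymm (Nat.sInf_le ⟨hm, h⟩) (le_csInf ⟨m, hm, h⟩ ?_)
  rintro k ⟨hk, hrk⟩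
  have h1 : (ctrbMat X B k).rank ≤ k * r := by
    simpa using (ctrbMat X B k).rank_le_card_width
  have h2 : m * r ≤ k * r := by omega
  exact Nat.le_of_mul_le_mul_right h2 hr

end

theorem controllable_perturbation_exact_index
    {n r : ℕ} (A : Matrix (Fin n) (Fin n) ℝ) (B : Matrix (Fin n) (Fin r) ℝ)
    (m : ℕ)
    (hc : Controllable A B) (hidx : ctrlIndex A B = m)
    (hmr : m * r = n)
    (M : Matrix (Fin n) (Fin n) ℝ) :
    {g : ℝ | ¬ (Controllable (M + g • A) B ∧ ctrlIndex (M + g • A) B = m)}.Finite := by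
  rcases Nat.eq_zero_or_pos n with hn | hn
  · -- degenerate case n = 0
    have hrk : ∀ (X : Matrix (Fin n) (Fin n) ℝ) (k : ℕ),
        (ctrbMat X B k).rank = Fintype.card (Fin n) := by
      intro X k
      have h1 := (ctrbMat X B k).rank_le_card_height
      simp only [Fintype.card_fin] at h1 ⊢
      omega
    have hctrl : ∀ X : Matrix (Fin n) (Fin n) ℝ, Controllable X B := fun X => hrk X _
    have hci : ∀ X : Matrix (Fin n) (Fin n) ℝ, ctrlIndex X B = 1 := by
      intro X
      refine le_antisymm (Nat.sInf_le ⟨one_pos, hrk X 1⟩)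
        (le_csInf ⟨1, one_pos, hrk X 1⟩ fun k hk => hk.1)
    have hm1 : m = 1 := by rw [← hidx, hci A]
    have : {g : ℝ | ¬ (Controllable (M + g • A) B ∧ ctrlIndex (M + g • A) B = m)} = ∅ := by
      ext g
      simp only [Set.mem_setOf_eq, Set.mem_empty_iff_false, iff_false, not_not]
      exact ⟨hctrl _, by rw [hci, hm1]⟩
    rw [this]; exact Set.finite_empty
  · have hr : 0 < r := by
      rcases Nat.eq_zero_or_pos r with h | h
      · subst h; simp at hmr; omega
      · exact h
    have hm : 0 < m := by
      rcases Nat.eq_zero_or_pos m with h | h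
      · subst h; simp at hmr; omega
      · exact h
    have hmn : m ≤ n := hmr ▸ Nat.le_mul_of_pos_right m hr
    -- rank of the m-step controllability matrix of (A, B) is n
    have hcn : (ctrbMat A B n).rank = Fintype.card (Fin n) :=
      (congrArg (fun k => (ctrbMat A B k).rank) (Fintype.card_fin n)).symm.trans hc
    have hmem : m ∈ {k | 0 < k ∧ (ctrbMat A B k).rank = Fintype.card (Fin n)} := by
      rw [← hidx]
      exact Nat.sInf_mem ⟨n, hn, hcn⟩
    have hrA : (ctrbMat A B m).rank = n := by
      have := hmem.2; simpa using this
    -- a bijection between column index types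
    let e : Fin n ≃ Fin m × Fin r := Fintype.equivOfCardEq (by simp [hmr])
    -- the polynomial determinant
    let P : Matrix (Fin n) (Fin n) ℝ[X] :=
      (Polynomial.X : ℝ[X]) • M.map (Polynomial.C : ℝ →+* ℝ[X]) + A.map (Polynomial.C : ℝ →+* ℝ[X])
    let Q : Matrix (Fin n) (Fin n) ℝ[X] :=
      Matrix.of fun i c => ((P ^ ((e c).1 : ℕ)) * (B.map Polynomial.C)) i (e c).2
    let q : ℝ[X] := Q.det
    have heval : ∀ t : ℝ, q.eval t = ((ctrbMat (t • M + A) B m).submatrix id e).det := by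
      intro t
      have h0 : q.eval t = (Q.map (Polynomial.evalRingHom t)).det :=
        RingHom.map_det (Polynomial.evalRingHom t) Q
      rw [h0]
      congr 1
      have hP : P.map (Polynomial.evalRingHom t) = t • M + A := by
        ext i j
        simp [P, Matrix.map_apply, Matrix.add_apply, Matrix.smul_apply, smul_eq_mul]
        ring
      have hB : (B.map Polynomial.C).map (Polynomial.evalRingHom t) = B := by
        ext i j; simp [Matrix.map_apply]
      have hmulpow : ∀ j : ℕ,
          ((P ^ j * B.map Polynomial.C).map (Polynomial.evalRingHom t))
            = (t • M + A) ^ j * B := by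
        intro j
        rw [Matrix.map_mul, ← RingHom.mapMatrix_apply, map_pow, RingHom.mapMatrix_apply, hP, hB]
      ext i c
      have := congrFun (congrFun (hmulpow ((e c).1 : ℕ)) i) (e c).2
      simpa [Q, ctrbMat, Matrix.map_apply] using this
    have hq0 : q.eval 0 ≠ 0 := by
      rw [heval 0]
      have h1 : ((ctrbMat ((0:ℝ) • M + A) B m).submatrix id e).rank = Fintype.card (Fin n) := by
        rw [rank_submatrix_id_eq]
        simp only [zero_smul, zero_add, Fintype.card_fin]
        exact hrA
      exact ((rank_eq_card_iff_isUnit_det _).mp h1).ne_zero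
    have hq : q ≠ 0 := fun h => hq0 (by simp [h])
    refine Set.Finite.subset
      ((((Polynomial.finite_setOf_isRoot hq).image fun x => x⁻¹)).insert 0) ?_
    intro g hg
    simp only [Set.mem_setOf_eq] at hg
    by_contra hgmem
    simp only [Set.mem_insert_iff, Set.mem_image, Set.mem_setOf_eq, not_or, not_exists] at hgmem
    obtain ⟨hg0, hgim⟩ := hgmem
    have hroot : q.eval g⁻¹ ≠ 0 := by
      intro h
      exact hgim g⁻¹ ⟨h, inv_inv g⟩
    have hdet2 : ((ctrbMat (g⁻¹ • M + A) B m).submatrix id e).det ≠ 0 := by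
      rw [← heval g⁻¹]; exact hroot
    have key : g⁻¹ • M + A = g⁻¹ • (M + g • A) := by
      rw [smul_add, smul_smul, inv_mul_cancel₀ hg0, one_smul]
    have hfact : (ctrbMat (g⁻¹ • (M + g • A)) B m).submatrix id e
        = ((ctrbMat (M + g • A) B m).submatrix id e)
            * Matrix.diagonal (fun c => g⁻¹ ^ ((e c).1 : ℕ)) := by
      ext i c
      rw [Matrix.mul_diagonal]
      have hsm : (g⁻¹ • (M + g • A)) ^ ((e c).1 : ℕ) * B
          = (g⁻¹ ^ ((e c).1 : ℕ)) • ((M + g • A) ^ ((e c).1 : ℕ) * B) := by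
        rw [_root_.smul_pow, Matrix.smul_mul]
      simp only [ctrbMat, Matrix.submatrix_apply, Matrix.of_apply, id]
      rw [hsm, Matrix.smul_apply, smul_eq_mul, mul_comm]
    have hdet3 : ((ctrbMat (M + g • A) B m).submatrix id e).det ≠ 0 := by
      intro h
      apply hdet2
      rw [key, hfact, Matrix.det_mul, h, zero_mul]
    have hrank : (ctrbMat (M + g • A) B m).rank = n := by
      have h1 := (rank_eq_card_iff_isUnit_det _).mpr (isUnit_iff_ne_zero.mpr hdet3)
      rw [rank_submatrix_id_eq, Fintype.card_fin] at h1
      exact h1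
    exact hg ⟨controllable_of_rank hmn _ hrank, ctrlIndex_eq_of_rank hm hr hmr _ hrank⟩
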